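/- arXiv:2206.11515 — 4 statements merged into one kernel-verified Lean document; each statement's English description precedes it below -/
import Mathlib

section
/- Let Π be an LP^MLN program and let Π' be the program obtained from Π by deleting all of its soft integrity constraints, i.e., all soft formulas of the form w : ¬F. Then the soft stable models of Π and of Π' coincide: SSM(Π) = SSM(Π'). -/
open Filter

attribute [local instance] Classical.propDecidable

/-- Propositional formulas over atoms `At`, built from atoms and `⊥`
    using `∧`, `∨`, `→`. -/
inductive Formula (At : Type) where
  | bot  : Formula At
  | atom : At → Formula At
  | and  : Formula At → Formula At → Formula At
  | or   : Formula At → Formula At → Formula At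
  | imp  : Formula At → Formula At → Formula At

namespace Formula

variable {At : Type}

/-- `¬F` abbreviates `F → ⊥`. -/
def neg (F : Formula At) : Formula At := imp F bot

/-- Classical satisfaction of a formula by an interpretation `X ⊆ At`. -/
def sat (X : Finset At) : Formula At → Prop
  | bot => False
  | atom a => a ∈ X
  | and F G => sat X F ∧ sat X G
  | or F G => sat X F ∨ sat X G
  | imp F G => sat X F → sat X G

/-- The reduct `F^X`: every maximal subformula not satisfied by `X` is
    replaced by `⊥`. -/
noncomputable def reduct (X : Finset At) : Formula At → Formula At
  | bot => bot
  | atom a => if sat X (atom a) then atom a else bot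
  | and F G => if sat X (and F G) then and (reduct X F) (reduct X G) else bot
  | or F G => if sat X (or F G) then or (reduct X F) (reduct X G) else bot
  | imp F G => if sat X (imp F G) then imp (reduct X F) (reduct X G) else bot

end Formula

variable {At : Type}

/-- `X` satisfies every formula in `Γ`. -/
def SatAll (X : Finset At) (Γ : Set (Formula At)) : Prop := ∀ F ∈ Γ, F.sat X

/-- `X` is a stable model of `Γ` (Ferraris semantics): `X` satisfies `Γ` and no
    proper subset of `X` satisfies the reduct `Γ^X`. -/
def IsStable (X : Finset At) (Γ : Set (Formula At)) : Prop :=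
  SatAll X Γ ∧ ∀ Y : Finset At, Y ⊂ X → ¬ SatAll Y (Formula.reduct X '' Γ)

/-- Weak constraint `:~ F [w, l]`. -/
structure WeakConstraint (At : Type) where
  formula : Formula At
  weight : ℝ
  level : ℕ

/-- `Cost_Ω(X, l)`: sum of the weights `w` over all `:~ F [w, l]` in `Ω` at level `l`
    whose formula is satisfied by `X`. -/
noncomputable def Cost (Ω : Finset (WeakConstraint At)) (X : Finset At) (l : ℕ) : ℝ :=
  ∑ c ∈ Ω.filter (fun c => c.level = l ∧ c.formula.sat X), c.weight

/-- `X` is an optimal stable model of `Γ ∪ Ω`. -/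
def OptStable (Γ : Set (Formula At)) (Ω : Finset (WeakConstraint At)) (X : Finset At) : Prop :=
  IsStable X Γ ∧
    ¬ ∃ Y : Finset At, IsStable Y Γ ∧ ∃ l : ℕ,
        Cost Ω Y l < Cost Ω X l ∧ ∀ l' : ℕ, l < l' → Cost Ω Y l' = Cost Ω X l'

/-- A weight is either the symbolic infinite weight `α` or a real number. -/
inductive Weight where
  | alpha : Weight
  | soft : ℝ → Weight

/-- The real value of a weight when the real number `a` is substituted for `α`. -/
def Weight.val (a : ℝ) : Weight → ℝ
  | .alpha => a
  | .soft w => w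

/-- A weighted formula `w : F`. -/
structure WFormula (At : Type) where
  weight : Weight
  formula : Formula At

/-- A hard formula `α : F`. -/
def WFormula.isHard (p : WFormula At) : Prop := p.weight = Weight.alpha

/-- A soft formula `w : F` with `w` a real number. -/
def WFormula.isSoft (p : WFormula At) : Prop := ∃ w : ℝ, p.weight = Weight.soft w

/-- `hard(Π)`. -/
noncomputable def hardPart (P : Finset (WFormula At)) : Finset (WFormula At) :=
  P.filter (fun p => p.isHard)

/-- `soft(Π)`. -/
noncomputable def softPart (P : Finset (WFormula At)) : Finset (WFormula At) :=
  P.filter (fun p => p.isSoft)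

/-- `Π_X`: the weighted formulas of `Π` whose formula is satisfied by `X`. -/
noncomputable def satPart (P : Finset (WFormula At)) (X : Finset At) : Finset (WFormula At) :=
  P.filter (fun p => p.formula.sat X)

/-- `SSM(Π)`: the soft stable models of the LP^MLN program `Π`. -/
def SSM (P : Finset (WFormula At)) : Set (Finset At) :=
  { X | IsStable X (WFormula.formula '' (↑(satPart P X) : Set (WFormula At))) }

/-- `W_Π(X, a)`. -/
noncomputable def Wgt (P : Finset (WFormula At)) (X : Finset At) (a : ℝ) : ℝ :=
  if X ∈ SSM P then Real.exp (∑ p ∈ satPart P X, p.weight.val a) else 0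

/-- The quotient whose limit as `a → ∞` defines `P_Π(X)`. -/
noncomputable def ratio [Fintype At] (P : Finset (WFormula At)) (X : Finset At) (a : ℝ) : ℝ :=
  Wgt P X a / ∑ Y ∈ Finset.univ.filter (fun Y => Y ∈ SSM P), Wgt P Y a

/-- `SSM'(Π)`: soft stable models satisfying all hard formulas. -/
def SSM' (P : Finset (WFormula At)) : Set (Finset At) :=
  { X | X ∈ SSM P ∧ ∀ p ∈ P, p.isHard → p.formula.sat X }

/-- `W'_Π(X)` (alternative semantics). -/
noncomputable def Wgt' (P : Finset (WFormula At)) (X : Finset At) : ℝ :=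
  if X ∈ SSM' P then
    Real.exp (∑ p ∈ (softPart P).filter (fun p => p.formula.sat X), p.weight.val 0)
  else 0

/-- `P'_Π(X)` (alternative semantics). -/
noncomputable def Pr' [Fintype At] (P : Finset (WFormula At)) (X : Finset At) : ℝ :=
  Wgt' P X / ∑ Y : Finset At, Wgt' P Y

/-- A plingo program: hard formulas, soft integrity constraints (a real weight
    together with the constraint formula), and weak constraints. -/
structure PlingoProgram (At : Type) where
  hard : Finset (Formula At)
  soft : Finset (ℝ × Formula At)
  weak : Finset (WeakConstraint At)

/-- `OSM(Π)`: optimal stable models of `hard(Π) ∪ weak(Π)`. -/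
def OSM (P : PlingoProgram At) : Set (Finset At) :=
  { X | OptStable (↑P.hard) P.weak X }

/-- `W''_Π(X)`. -/
noncomputable def Wgt'' (P : PlingoProgram At) (X : Finset At) : ℝ :=
  if X ∈ OSM P then Real.exp (∑ p ∈ P.soft.filter (fun p => p.2.sat X), p.1) else 0

/-- `P''_Π(X)`. -/
noncomputable def Pr'' [Fintype At] (P : PlingoProgram At) (X : Finset At) : ℝ :=
  Wgt'' P X / ∑ Y ∈ Finset.univ.filter (fun Y => Y ∈ OSM P), Wgt'' P Y

/-- A soft integrity constraint: a soft formula of the form `w : ¬F`. -/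
def WFormula.isSoftIC {At : Type} (p : WFormula At) : Prop :=
  p.isSoft ∧ ∃ F : Formula At, p.formula = F.neg

lemma reduct_not_sat {At : Type} (X : Finset At) (F : Formula At) (h : ¬ F.sat X) :
    F.reduct X = Formula.bot := by
  cases F <;> simp only [Formula.reduct] <;> first | rfl | exact if_neg h

lemma satAll_satPart {At : Type} (P : Finset (WFormula At)) (X : Finset At) :
    SatAll X (WFormula.formula '' (↑(satPart P X) : Set (WFormula At))) := by
  rintro F ⟨p, hp, rfl⟩
  exact (Finset.mem_filter.mp (Finset.mem_coe.mp hp)).2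

lemma satAll_reduct_iff {At : Type} (P : Finset (WFormula At)) (X Y : Finset At) :
    SatAll Y (Formula.reduct X '' (WFormula.formula ''
        (↑(satPart P X) : Set (WFormula At)))) ↔
    SatAll Y (Formula.reduct X '' (WFormula.formula ''
        (↑(satPart (P.filter (fun p => ¬ p.isSoftIC)) X) : Set (WFormula At)))) := by
  constructor
  · rintro h G ⟨F, ⟨p, hp, rfl⟩, rfl⟩
    refine h _ ⟨p.formula, ⟨p, ?_, rfl⟩, rfl⟩
    have hp' := Finset.mem_filter.mp (by exact_mod_cast hp)
    have hp'' := Finset.mem_filter.mp hp'.1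
    exact_mod_cast Finset.mem_filter.mpr ⟨hp''.1, hp'.2⟩
  · rintro h G ⟨F, ⟨p, hp, rfl⟩, rfl⟩
    have hp' := Finset.mem_filter.mp (show p ∈ satPart P X from by exact_mod_cast hp)
    by_cases hic : p.isSoftIC
    · obtain ⟨-, F, hF⟩ := hic
      have hns : ¬ F.sat X := by
        have := hp'.2
        rw [hF] at this
        exact this
      rw [hF]
      show Formula.sat Y (Formula.reduct X (Formula.imp F Formula.bot))
      have hsat : Formula.sat X (Formula.imp F Formula.bot) := by
        have := hp'.2; rw [hF] at this; exact this
      simp only [Formula.reduct, if_pos hsat, reduct_not_sat X F hns]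
      intro hb
      exact hb
    · refine h _ ⟨p.formula, ⟨p, ?_, rfl⟩, rfl⟩
      exact_mod_cast Finset.mem_filter.mpr
        ⟨Finset.mem_filter.mpr ⟨hp'.1, hic⟩, hp'.2⟩

/-- deleting all soft integrity constraints from an LP^MLN program
    leaves its soft stable models unchanged. -/
theorem ssm_delete_soft_integrity_constraints {At : Type} [Fintype At]
    (P : Finset (WFormula At)) :
    SSM P = SSM (P.filter (fun p => ¬ p.isSoftIC)) := by
  ext X
  simp only [SSM, Set.mem_setOf_eq, IsStable]
  constructor
  · rintro ⟨-, hmin⟩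
    exact ⟨satAll_satPart _ _, fun Y hY hs =>
      hmin Y hY ((satAll_reduct_iff P X Y).mpr hs)⟩
  · rintro ⟨-, hmin⟩
    exact ⟨satAll_satPart _ _, fun Y hY hs =>
      hmin Y hY ((satAll_reduct_iff P X Y).mp hs)⟩
end

section
/- Let Π be an LP^MLN program over a finite set of atoms with SSM'(Π) ≠ ∅, and let τ₃(Π) be the plingo program with hard formulas {α : F : (α : F) ∈ hard(Π)} ∪ {α : F ∨ ¬F : (w : F) ∈ soft(Π)}, soft integrity constraints {w : ¬¬F : (w : F) ∈ soft(Π)}, and weak constraints {:~ F [−1, 1] : (α : F) ∈ hard(Π)}. Then for every interpretation X, P'_Π(X) = P''_{τ₃(Π)}(X), i.e., τ₃ represents the alternative LP^MLN semantics as a plingo program. -/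
open Filter

attribute [local instance] Classical.propDecidable

variable {At : Type}

/-- The translation `τ₃`: hard formulas `{α : F : (α : F) ∈ hard(Π)} ∪
    {α : F ∨ ¬F : (w : F) ∈ soft(Π)}`, soft integrity constraints
    `{w : ¬¬F : (w : F) ∈ soft(Π)}`, and weak constraints
    `{:~ F [−1, 1] : (α : F) ∈ hard(Π)}`. -/
noncomputable def tau3 {At : Type} (P : Finset (WFormula At)) : PlingoProgram At where
  hard := (hardPart P).image (fun p => p.formula) ∪
          (softPart P).image (fun p => (p.formula).or p.formula.neg)
  soft := (softPart P).image (fun p => (p.weight.val 0, p.formula.neg.neg))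
  weak := (hardPart P).image (fun p => ⟨p.formula, -1, 1⟩)

section Aux

variable {At : Type}

lemma Formula.reduct_of_not_sat {X : Finset At} {F : Formula At} (h : ¬ F.sat X) :
    F.reduct X = Formula.bot := by
  cases F with
  | bot => rfl
  | atom a => simp [Formula.reduct, h]
  | and F G => simp [Formula.reduct, h]
  | or F G => simp [Formula.reduct, h]
  | imp F G => simp [Formula.reduct, h]

lemma sat_choice (X : Finset At) (F : Formula At) : Formula.sat X (F.or F.neg) := by
  by_cases h : F.sat X
  · exact Or.inl h
  · exact Or.inr (fun hF => h hF)

lemma choice_reduct_sat (X Z : Finset At) (F : Formula At) :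
    Formula.sat Z (Formula.reduct X (F.or F.neg)) ↔
      (F.sat X → Formula.sat Z (F.reduct X)) := by
  by_cases hF : F.sat X
  · have hneg : ¬ Formula.sat X F.neg := fun hn => hn hF
    have hred : Formula.reduct X (F.or F.neg) = Formula.or (F.reduct X) Formula.bot := by
      rw [show Formula.reduct X (F.or F.neg) =
        Formula.or (F.reduct X) (Formula.reduct X F.neg) from by
          simp [Formula.reduct, sat_choice X F]]
      rw [Formula.reduct_of_not_sat hneg]
    rw [hred]
    constructor
    · rintro (h | h)
      · exact fun _ => h
      · exact absurd h (by simp [Formula.sat])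
    · intro h; exact Or.inl (h hF)
  · have hred : Formula.reduct X (F.or F.neg) =
        Formula.or Formula.bot (Formula.imp Formula.bot Formula.bot) := by
      have h1 : Formula.reduct X F.neg = Formula.imp Formula.bot Formula.bot := by
        have hs : Formula.sat X (F.imp Formula.bot) := fun h => absurd h hF
        show Formula.reduct X (Formula.imp F Formula.bot) = _
        simp [Formula.reduct, hs, Formula.reduct_of_not_sat hF]
      rw [show Formula.reduct X (F.or F.neg) =
        Formula.or (F.reduct X) (Formula.reduct X F.neg) from by
          simp [Formula.reduct, sat_choice X F]]
      rw [Formula.reduct_of_not_sat hF, h1]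
    rw [hred]
    constructor
    · intro _ h; exact absurd h hF
    · intro _; exact Or.inr (fun h => h)

lemma hard_or_soft (p : WFormula At) : p.isHard ∨ p.isSoft := by
  cases hw : p.weight with
  | alpha => exact Or.inl hw
  | soft w => exact Or.inr ⟨w, hw⟩

lemma mem_tau3_hard (P : Finset (WFormula At)) (F : Formula At) :
    F ∈ (tau3 P).hard ↔
      (∃ p ∈ P, p.isHard ∧ p.formula = F) ∨
      (∃ p ∈ P, p.isSoft ∧ (p.formula.or p.formula.neg) = F) := by
  simp [tau3, hardPart, softPart, Finset.mem_union, Finset.mem_image,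
    Finset.mem_filter, and_assoc]

lemma mem_gamma (P : Finset (WFormula At)) (Y : Finset At) (F : Formula At) :
    F ∈ (WFormula.formula '' (↑(satPart P Y) : Set (WFormula At))) ↔
      ∃ p ∈ P, p.formula.sat Y ∧ p.formula = F := by
  simp [satPart, Set.mem_image, Finset.mem_filter, and_assoc]

lemma stable_hard_iff (P : Finset (WFormula At)) (Y : Finset At) :
    IsStable Y (↑((tau3 P).hard) : Set (Formula At)) ↔ Y ∈ SSM' P := by
  constructor
  · rintro ⟨hsatH, hminH⟩
    have hhard : ∀ p ∈ P, p.isHard → p.formula.sat Y := by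
      intro p hp hH
      exact hsatH p.formula (by rw [Finset.mem_coe, mem_tau3_hard]; exact Or.inl ⟨p, hp, hH, rfl⟩)
    refine ⟨⟨?_, ?_⟩, hhard⟩
    · intro F hF
      obtain ⟨p, _, hs, rfl⟩ := (mem_gamma P Y F).1 hF
      exact hs
    · intro Z hZ hZsat
      refine hminH Z hZ ?_
      rintro G ⟨F, hF, rfl⟩
      rw [Finset.mem_coe, mem_tau3_hard] at hF
      rcases hF with ⟨p, hp, hH, rfl⟩ | ⟨p, hp, hS, rfl⟩
      · have hs : p.formula.sat Y := hhard p hp hH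
        exact hZsat _ ⟨p.formula, (mem_gamma P Y _).2 ⟨p, hp, hs, rfl⟩, rfl⟩
      · rw [choice_reduct_sat]
        intro hs
        exact hZsat _ ⟨p.formula, (mem_gamma P Y _).2 ⟨p, hp, hs, rfl⟩, rfl⟩
  · rintro ⟨⟨hsatG, hminG⟩, hhard⟩
    constructor
    · intro F hF
      rw [Finset.mem_coe, mem_tau3_hard] at hF
      rcases hF with ⟨p, hp, hH, rfl⟩ | ⟨p, _, _, rfl⟩
      · exact hhard p hp hH
      · exact sat_choice Y p.formula
    · intro Z hZ hZsat
      refine hminG Z hZ ?_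
      rintro G ⟨F, hF, rfl⟩
      obtain ⟨p, hp, hs, rfl⟩ := (mem_gamma P Y F).1 hF
      rcases hard_or_soft p with hH | hS
      · exact hZsat _ ⟨p.formula, by
          rw [Finset.mem_coe, mem_tau3_hard]; exact Or.inl ⟨p, hp, hH, rfl⟩, rfl⟩
      · have := hZsat _ ⟨p.formula.or p.formula.neg, by
          rw [Finset.mem_coe, mem_tau3_hard]; exact Or.inr ⟨p, hp, hS, rfl⟩, rfl⟩
        exact (choice_reduct_sat Y Z p.formula).1 this hs

lemma cost_const (P : Finset (WFormula At)) {Y Z : Finset At}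
    (hY : SatAll Y (↑((tau3 P).hard) : Set (Formula At)))
    (hZ : SatAll Z (↑((tau3 P).hard) : Set (Formula At))) (l : ℕ) :
    Cost (tau3 P).weak Y l = Cost (tau3 P).weak Z l := by
  unfold Cost
  congr 1
  apply Finset.filter_congr
  intro c hc
  have hmem : ∃ p ∈ hardPart P, (⟨p.formula, -1, 1⟩ : WeakConstraint At) = c := by
    simpa [tau3, Finset.mem_image] using hc
  obtain ⟨p, hp, rfl⟩ := hmem
  rw [hardPart, Finset.mem_filter] at hp
  have hmemH : p.formula ∈ ((tau3 P).hard : Set (Formula At)) := by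
    rw [Finset.mem_coe, mem_tau3_hard]; exact Or.inl ⟨p, hp.1, hp.2, rfl⟩
  simp [hY _ hmemH, hZ _ hmemH]

lemma osm_eq_ssm' (P : Finset (WFormula At)) : OSM (tau3 P) = SSM' P := by
  ext Y
  constructor
  · rintro ⟨hst, -⟩
    exact (stable_hard_iff P Y).1 hst
  · intro hY
    have hst := (stable_hard_iff P Y).2 hY
    refine ⟨hst, ?_⟩
    rintro ⟨Y', hY', l, hlt, -⟩
    rw [cost_const P hY'.1 hst.1 l] at hlt
    exact lt_irrefl _ hlt

lemma soft_sum_eq (P : Finset (WFormula At)) (Y : Finset At) :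
    ∑ p ∈ (softPart P).filter (fun p => p.formula.sat Y), p.weight.val 0 =
      ∑ q ∈ (tau3 P).soft.filter (fun q => q.2.sat Y), q.1 := by
  have himg : ((tau3 P).soft).filter (fun q => q.2.sat Y) =
      ((softPart P).filter (fun p => p.formula.sat Y)).image
        (fun p => (p.weight.val 0, p.formula.neg.neg)) := by
    show ((softPart P).image _).filter _ = _
    rw [Finset.filter_image]
    congr 1
    apply Finset.filter_congr
    intro p _
    show (Formula.sat Y p.formula.neg.neg) ↔ (p.formula.sat Y)
    constructor
    · intro h
      by_contra hn
      exact h (fun hs => hn hs)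
    · intro h hn
      exact hn h
  rw [himg, Finset.sum_image]
  intro p hp q hq hfq
  rw [Finset.mem_coe, Finset.mem_filter, softPart, Finset.mem_filter] at hp hq
  obtain ⟨w, hw⟩ := hp.1.2
  obtain ⟨v, hv⟩ := hq.1.2
  have h1 : p.weight.val 0 = q.weight.val 0 := congrArg Prod.fst hfq
  have h2 : p.formula.neg.neg = q.formula.neg.neg := congrArg Prod.snd hfq
  have hF : p.formula = q.formula := by
    simpa [Formula.neg] using h2
  have hW : p.weight = q.weight := by
    rw [hw, hv]
    rw [hw, hv] at h1
    simpa [Weight.val] using h1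
  cases p; cases q; simp_all

lemma wgt_eq (P : Finset (WFormula At)) (Y : Finset At) :
    Wgt' P Y = Wgt'' (tau3 P) Y := by
  unfold Wgt' Wgt''
  rw [osm_eq_ssm']
  by_cases hY : Y ∈ SSM' P
  · rw [if_pos hY, if_pos hY]
    rw [soft_sum_eq]
  · rw [if_neg hY, if_neg hY]

end Aux

/-- if `SSM'(Π) ≠ ∅` then `P'_Π(X) = P''_{τ₃(Π)}(X)` for every `X`. -/
theorem lpmln_alt_prob_eq_tau3_prob {At : Type} [Fintype At] (P : Finset (WFormula At))
    (h : (SSM' P).Nonempty) (X : Finset At) :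
    Pr' P X = Pr'' (tau3 P) X := by
  unfold Pr' Pr''
  have hden : ∑ Y : Finset At, Wgt' P Y =
      ∑ Y ∈ Finset.univ.filter (fun Y => Y ∈ OSM (tau3 P)), Wgt'' (tau3 P) Y := by
    rw [Finset.sum_filter]
    apply Finset.sum_congr rfl
    intro Y _
    rw [wgt_eq P Y]
    by_cases hY : Y ∈ OSM (tau3 P)
    · simp [hY]
    · simp [hY, Wgt'', if_neg hY]
  rw [wgt_eq P X, hden]
end

section
/- Let Π be an LP^MLN program over a finite set of atoms such that SSM'(Π) ≠ ∅. Then for every interpretation X, the limit defining P_Π(X) exists and P_Π(X) = P'_Π(X); that is, the standard and the alternative LP^MLN semantics assign the same probability to every interpretation whenever some soft stable model satisfies all hard formulas. -/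
open Filter

attribute [local instance] Classical.propDecidable

variable {At : Type}

section Aux

variable {At : Type}

lemma not_isHard_iff (p : WFormula At) : ¬ p.isHard ↔ p.isSoft := by
  cases hp : p.weight with
  | alpha => simp [WFormula.isHard, WFormula.isSoft, hp]
  | soft w => simp [WFormula.isHard, WFormula.isSoft, hp]

/-- number of hard formulas of `Π` satisfied by `Y`. -/
noncomputable def hk (P : Finset (WFormula At)) (Y : Finset At) : ℕ :=
  ((satPart P Y).filter (fun p => p.isHard)).card

/-- sum of the soft weights of formulas of `Π` satisfied by `Y`. -/
noncomputable def sS (P : Finset (WFormula At)) (Y : Finset At) : ℝ :=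
  ∑ p ∈ (satPart P Y).filter (fun p => p.isSoft), p.weight.val 0

lemma sum_val_eq (P : Finset (WFormula At)) (Y : Finset At) (a : ℝ) :
    ∑ p ∈ satPart P Y, p.weight.val a = (hk P Y : ℝ) * a + sS P Y := by
  rw [← Finset.sum_filter_add_sum_filter_not (satPart P Y) (fun p => p.isHard)]
  congr 1
  · rw [Finset.sum_congr rfl (fun p hp => ?_), Finset.sum_const, nsmul_eq_mul, hk]
    have hh := (Finset.mem_filter.mp hp).2
    simp [WFormula.isHard] at hh
    simp [Weight.val, hh]
  · rw [Finset.filter_congr (fun p _ => not_isHard_iff p), sS]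
    refine Finset.sum_congr rfl (fun p hp => ?_)
    obtain ⟨w, hw⟩ := (Finset.mem_filter.mp hp).2
    simp [Weight.val, hw]

lemma Wgt_eq (P : Finset (WFormula At)) {Y : Finset At} (hY : Y ∈ SSM P) (a : ℝ) :
    Wgt P Y a = Real.exp ((hk P Y : ℝ) * a + sS P Y) := by
  rw [Wgt, if_pos hY, sum_val_eq]

lemma hk_eq_of_mem (P : Finset (WFormula At)) {Y : Finset At} (hY : Y ∈ SSM' P) :
    hk P Y = (hardPart P).card := by
  unfold hk
  congr 1
  ext p
  simp only [satPart, hardPart, Finset.mem_filter, and_assoc]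
  constructor
  · tauto
  · rintro ⟨hp, hh⟩
    exact ⟨hp, hY.2 p hp hh, hh⟩

lemma hk_lt_of_not_mem (P : Finset (WFormula At)) {Y : Finset At} (hY : Y ∈ SSM P)
    (hY' : Y ∉ SSM' P) : hk P Y < (hardPart P).card := by
  have hex : ∃ p ∈ P, p.isHard ∧ ¬ p.formula.sat Y := by
    by_contra hc
    push_neg at hc
    exact hY' ⟨hY, fun p hp hh => hc p hp hh⟩
  obtain ⟨p, hp, hh, hns⟩ := hex
  apply Finset.card_lt_card
  constructor
  · intro q hq
    simp only [satPart, hardPart, Finset.mem_filter] at *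
    tauto
  · intro hsub
    have : p ∈ (satPart P Y).filter (fun p => p.isHard) :=
      hsub (by simp [hardPart, Finset.mem_filter, hp, hh])
    simp only [satPart, Finset.mem_filter] at this
    exact hns this.1.2

lemma Wgt'_eq (P : Finset (WFormula At)) {Y : Finset At} (hY : Y ∈ SSM' P) :
    Wgt' P Y = Real.exp (sS P Y) := by
  rw [Wgt', if_pos hY]
  congr 1
  apply Finset.sum_congr _ (fun _ _ => rfl)
  ext p
  simp only [softPart, satPart, Finset.mem_filter]
  tauto

lemma Wgt'_nonneg (P : Finset (WFormula At)) (Y : Finset At) : 0 ≤ Wgt' P Y := by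
  rw [Wgt']
  split
  · exact (Real.exp_pos _).le
  · exact le_refl 0

lemma f_tendsto (P : Finset (WFormula At)) (Y : Finset At) :
    Tendsto (fun a : ℝ => Wgt P Y a * Real.exp (-((hardPart P).card : ℝ) * a))
      atTop (nhds (Wgt' P Y)) := by
  set K : ℝ := ((hardPart P).card : ℝ) with hK
  by_cases hY : Y ∈ SSM P
  · by_cases hY' : Y ∈ SSM' P
    · have heq : (fun a : ℝ => Wgt P Y a * Real.exp (-K * a)) = fun _ => Wgt' P Y := by
        funext a
        rw [Wgt_eq P hY, hk_eq_of_mem P hY', Wgt'_eq P hY', ← Real.exp_add]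
        congr 1
        ring
      rw [heq]
      exact tendsto_const_nhds
    · have hlt : (hk P Y : ℝ) < K := by
        rw [hK]; exact_mod_cast hk_lt_of_not_mem P hY hY'
      have hd : (0 : ℝ) < K - (hk P Y : ℝ) := by linarith
      have h1 : Tendsto (fun a : ℝ => Real.exp (-((K - (hk P Y : ℝ)) * a))) atTop (nhds 0) :=
        Real.tendsto_exp_neg_atTop_nhds_zero.comp (tendsto_id.const_mul_atTop hd)
      have h2 : Tendsto (fun a : ℝ => Real.exp (sS P Y) *
          Real.exp (-((K - (hk P Y : ℝ)) * a))) atTop (nhds (Real.exp (sS P Y) * 0)) :=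
        h1.const_mul _
      have heq : (fun a : ℝ => Wgt P Y a * Real.exp (-K * a)) =
          fun a : ℝ => Real.exp (sS P Y) * Real.exp (-((K - (hk P Y : ℝ)) * a)) := by
        funext a
        rw [Wgt_eq P hY, ← Real.exp_add, ← Real.exp_add]
        congr 1
        ring
      rw [heq]
      have : Wgt' P Y = 0 := by rw [Wgt', if_neg hY']
      rw [this]
      simpa using h2
  · have heq : (fun a : ℝ => Wgt P Y a * Real.exp (-K * a)) = fun _ => (0 : ℝ) := by
      funext a
      rw [Wgt, if_neg hY, zero_mul]
    have : Wgt' P Y = 0 := by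
      rw [Wgt', if_neg]
      intro hY'
      exact hY hY'.1
    rw [heq, this]
    exact tendsto_const_nhds

end Aux

/-- if `SSM'(Π) ≠ ∅`, then for every interpretation `X` the limit
    defining `P_Π(X)` exists and equals `P'_Π(X)`. -/
theorem lpmln_standard_eq_alternative {At : Type} [Fintype At] (P : Finset (WFormula At))
    (h : (SSM' P).Nonempty) (X : Finset At) :
    Tendsto (fun a : ℝ => ratio P X a) atTop (nhds (Pr' P X)) := by
  set K : ℝ := ((hardPart P).card : ℝ) with hK
  set S : Finset (Finset At) := Finset.univ.filter (fun Y => Y ∈ SSM P) with hS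
  -- denominator tendsto
  have hden : Tendsto (fun a : ℝ => (∑ Y ∈ S, Wgt P Y a) * Real.exp (-K * a)) atTop
      (nhds (∑ Y ∈ S, Wgt' P Y)) := by
    have : (fun a : ℝ => (∑ Y ∈ S, Wgt P Y a) * Real.exp (-K * a)) =
        fun a : ℝ => ∑ Y ∈ S, Wgt P Y a * Real.exp (-K * a) := by
      funext a; rw [Finset.sum_mul]
    rw [this]
    exact tendsto_finset_sum S (fun Y _ => f_tendsto P Y)
  have hsum_eq : ∑ Y ∈ S, Wgt' P Y = ∑ Y : Finset At, Wgt' P Y := by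
    apply Finset.sum_filter_of_ne
    intro Y _ hne
    by_contra hY
    apply hne
    rw [Wgt', if_neg]
    intro hY'
    exact hY hY'.1
  have hpos : 0 < ∑ Y : Finset At, Wgt' P Y := by
    obtain ⟨X₀, hX₀⟩ := h
    apply Finset.sum_pos' (fun Y _ => Wgt'_nonneg P Y)
    refine ⟨X₀, Finset.mem_univ _, ?_⟩
    rw [Wgt'_eq P hX₀]
    exact Real.exp_pos _
  have hne : (∑ Y ∈ S, Wgt' P Y) ≠ 0 := by rw [hsum_eq]; exact ne_of_gt hpos
  have hratio : (fun a : ℝ => ratio P X a) =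
      fun a : ℝ => (Wgt P X a * Real.exp (-K * a)) /
        ((∑ Y ∈ S, Wgt P Y a) * Real.exp (-K * a)) := by
    funext a
    rw [ratio, mul_div_mul_right _ _ (Real.exp_ne_zero _)]
  rw [hratio, Pr']
  rw [← hsum_eq]
  exact (f_tendsto P X).div hden hne
end

section
/- Let Π be an LP^MLN program over a finite set of atoms and let τ₂(Π) be the plingo program with hard formulas {α : F ∨ ¬F : (w : F) ∈ Π}, soft integrity constraints {w : ¬¬F : (w : F) ∈ soft(Π)}, and weak constraints {:~ F [−1, 1] : (α : F) ∈ hard(Π)}. Then OSM(τ₂(Π)) = {X ∈ SSM(Π) : |hard(Π)_X| ≥ |hard(Π)_Y| for every Y ∈ SSM(Π)}; that is, the hard formulas of τ₂(Π) generate exactly the soft stable models of Π, and its weak constraints select those satisfying a maximal number of hard formulas of Π. -/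
open Filter

attribute [local instance] Classical.propDecidable

variable {At : Type}

/-- The translation `τ₂`: hard formulas `{α : F ∨ ¬F : (w : F) ∈ Π}`, soft integrity
    constraints `{w : ¬¬F : (w : F) ∈ soft(Π)}`, and weak constraints
    `{:~ F [−1, 1] : (α : F) ∈ hard(Π)}`. -/
noncomputable def tau2 {At : Type} (P : Finset (WFormula At)) : PlingoProgram At where
  hard := P.image (fun p => (p.formula).or p.formula.neg)
  soft := (softPart P).image (fun p => (p.weight.val 0, p.formula.neg.neg))
  weak := (hardPart P).image (fun p => ⟨p.formula, -1, 1⟩)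

lemma Formula.reduct_bot_of_not_sat {At : Type} {X : Finset At} {F : Formula At}
    (h : ¬ F.sat X) : F.reduct X = Formula.bot := by
  cases F <;> simp only [Formula.reduct] <;> first | rfl | rw [if_neg h]

lemma Formula.sat_or_neg {At : Type} {X : Finset At} (F : Formula At) :
    (F.or F.neg).sat X := by
  by_cases h : F.sat X
  · exact Or.inl h
  · exact Or.inr h

lemma Formula.reduct_or_neg_sat_iff {At : Type} {X Y : Finset At} (F : Formula At) :
    Formula.sat Y ((F.or F.neg).reduct X) ↔ (F.sat X → Formula.sat Y (F.reduct X)) := by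
  have hs : (F.or F.neg).sat X := Formula.sat_or_neg F
  by_cases h : F.sat X
  · simp [Formula.reduct, Formula.sat, Formula.neg, h]
  · simp [Formula.reduct, Formula.sat, Formula.neg, h, Formula.reduct_bot_of_not_sat h]

lemma stable_tau2_iff {At : Type} (P : Finset (WFormula At)) (X : Finset At) :
    IsStable X (↑((tau2 P).hard) : Set (Formula At)) ↔ X ∈ SSM P := by
  have h1 : SatAll X (↑((tau2 P).hard) : Set (Formula At)) := by
    intro G hG
    simp only [tau2, Finset.coe_image, Set.mem_image, Finset.mem_coe] at hG
    obtain ⟨p, _, rfl⟩ := hG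
    exact Formula.sat_or_neg _
  have h2 : SatAll X (WFormula.formula '' (↑(satPart P X) : Set (WFormula At))) := by
    intro G hG
    obtain ⟨p, hp, rfl⟩ := hG
    exact (Finset.mem_filter.mp hp).2
  have h3 : ∀ Y : Finset At,
      SatAll Y (Formula.reduct X '' (↑((tau2 P).hard) : Set (Formula At))) ↔
      SatAll Y (Formula.reduct X ''
        (WFormula.formula '' (↑(satPart P X) : Set (WFormula At)))) := by
    intro Y
    constructor
    · intro hY G hG
      obtain ⟨G', hG', rfl⟩ := hG
      obtain ⟨p, hp, rfl⟩ := hG'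
      have hmem : (p.formula.or p.formula.neg) ∈ (tau2 P).hard := by
        simp only [tau2, Finset.mem_image]
        exact ⟨p, (Finset.mem_filter.mp hp).1, rfl⟩
      have := hY _ ⟨_, Finset.mem_coe.mpr hmem, rfl⟩
      exact (Formula.reduct_or_neg_sat_iff p.formula).mp this (Finset.mem_filter.mp hp).2
    · intro hY G hG
      obtain ⟨G', hG', rfl⟩ := hG
      rw [Finset.mem_coe] at hG'
      simp only [tau2, Finset.mem_image] at hG'
      obtain ⟨p, hp, rfl⟩ := hG'
      rw [Formula.reduct_or_neg_sat_iff]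
      intro hsat
      exact hY _ ⟨p.formula, ⟨p, Finset.mem_coe.mpr (Finset.mem_filter.mpr ⟨hp, hsat⟩), rfl⟩, rfl⟩
  constructor
  · rintro ⟨_, hmin⟩
    exact ⟨h2, fun Y hY hs => hmin Y hY ((h3 Y).mpr hs)⟩
  · rintro ⟨_, hmin⟩
    exact ⟨h1, fun Y hY hs => hmin Y hY ((h3 Y).mp hs)⟩

lemma hardPart_injOn {At : Type} (P : Finset (WFormula At)) :
    Set.InjOn (fun p : WFormula At => (⟨p.formula, -1, 1⟩ : WeakConstraint At))
      ↑(hardPart P) := by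
  intro p hp q hq h
  have hp' : p.weight = Weight.alpha := (Finset.mem_filter.mp hp).2
  have hq' : q.weight = Weight.alpha := (Finset.mem_filter.mp hq).2
  have hf : p.formula = q.formula := congrArg WeakConstraint.formula h
  cases p; cases q
  simp_all

lemma cost_tau2_ne_one {At : Type} (P : Finset (WFormula At)) (X : Finset At) (l : ℕ)
    (hl : l ≠ 1) : Cost (tau2 P).weak X l = 0 := by
  unfold Cost
  rw [Finset.filter_false_of_mem, Finset.sum_empty]
  rintro c hc ⟨h1, -⟩
  simp only [tau2, Finset.mem_image] at hc
  obtain ⟨p, -, rfl⟩ := hc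
  exact hl h1.symm

lemma cost_tau2_one {At : Type} (P : Finset (WFormula At)) (X : Finset At) :
    Cost (tau2 P).weak X 1 =
      -(((hardPart P).filter (fun q => q.formula.sat X)).card : ℝ) := by
  unfold Cost
  have : (tau2 P).weak = (hardPart P).image
      (fun p : WFormula At => (⟨p.formula, -1, 1⟩ : WeakConstraint At)) := rfl
  rw [this, Finset.filter_image]
  have hinj : Set.InjOn (fun p : WFormula At => (⟨p.formula, -1, 1⟩ : WeakConstraint At))
      ↑((hardPart P).filter fun a =>
        (⟨a.formula, -1, 1⟩ : WeakConstraint At).level = 1 ∧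
          (⟨a.formula, -1, 1⟩ : WeakConstraint At).formula.sat X) :=
    (hardPart_injOn P).mono (Finset.coe_subset.mpr (Finset.filter_subset _ _))
  rw [Finset.sum_image (fun p hp q hq h => hinj (Finset.mem_coe.mpr hp) (Finset.mem_coe.mpr hq) h)]
  have hset : ((hardPart P).filter fun a =>
      (⟨a.formula, -1, 1⟩ : WeakConstraint At).level = 1 ∧
        (⟨a.formula, -1, 1⟩ : WeakConstraint At).formula.sat X) =
      (hardPart P).filter (fun q => q.formula.sat X) := by
    apply Finset.filter_congr
    intro q hq
    simp
  rw [hset]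
  simp [Finset.sum_const]

/-- `OSM(τ₂(Π))` consists exactly of the soft stable models of `Π`
    satisfying a maximal number of hard formulas of `Π`. -/
theorem osm_tau2_eq_max_hard_ssm {At : Type} [Fintype At] (P : Finset (WFormula At)) :
    OSM (tau2 P) = { X | X ∈ SSM P ∧ ∀ Y ∈ SSM P,
      ((hardPart P).filter (fun q => q.formula.sat Y)).card ≤
        ((hardPart P).filter (fun q => q.formula.sat X)).card } := by
  ext X
  simp only [OSM, Set.mem_setOf_eq, OptStable, stable_tau2_iff]
  constructor
  · rintro ⟨hX, hopt⟩
    refine ⟨hX, fun Y hY => ?_⟩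
    by_contra hlt
    push_neg at hlt
    apply hopt
    refine ⟨Y, hY, 1, ?_, ?_⟩
    · rw [cost_tau2_one, cost_tau2_one]
      exact neg_lt_neg (by exact_mod_cast hlt)
    · intro l' hl'
      rw [cost_tau2_ne_one P X l' (by omega), cost_tau2_ne_one P Y l' (by omega)]
  · rintro ⟨hX, hmax⟩
    refine ⟨hX, ?_⟩
    rintro ⟨Y, hYs, l, hlt, -⟩
    have hY : Y ∈ SSM P := hYs
    by_cases hl : l = 1
    · subst hl
      rw [cost_tau2_one, cost_tau2_one, neg_lt_neg_iff, Nat.cast_lt] at hlt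
      exact absurd (hmax Y hY) (by omega)
    · rw [cost_tau2_ne_one P X l hl, cost_tau2_ne_one P Y l hl] at hlt
      exact lt_irrefl _ hlt
end
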